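/- Let I be an ideal on ℕ, S nonempty, and B = (B_i)_{i∈S} a family of non-negative matrices with sup{Σ_k b_{nk}^{(i)} : n ∈ ℕ, i ∈ S} < ∞ and Σ_k b_{nk}^{(i)} → 1 along I uniformly in i ∈ S. Then a real number a is a J_{B,I}-cluster point of the sequence s = (s_n) if and only if for every ε > 0, I-liminf inf_{i∈S} Σ_k b_{nk}^{(i)} χ_{D(s,a,ε)}(k) < 1, where D(s,a,ε) = {k : |s_k − a| ≥ ε}. -/
import Mathlib


/-- An ideal on ℕ: nonempty collection of subsets, not containing ℕ,
closed under subsets and finite unions. -/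
def IsIdeal (I : Set (Set ℕ)) : Prop :=
  I.Nonempty ∧ Set.univ ∉ I ∧ (∀ A ∈ I, ∀ B, B ⊆ A → B ∈ I) ∧ ∀ A ∈ I, ∀ B ∈ I, A ∪ B ∈ I

/-- Convergence of `g n i` to `g0 i` along the ideal `I`, uniformly in `i ∈ S`. -/
def UnifConvAlong {S : Type*} (I : Set (Set ℕ)) (g : ℕ → S → ℝ) (g0 : S → ℝ) : Prop :=
  ∀ ε > 0, ∃ E ∈ I, ∀ i : S, {n : ℕ | ε ≤ |g n i - g0 i|} ⊆ E

/-- The collection `J_{B,I}` of sets `K ⊆ ℕ` whose matrix transforms tend to 0 along `I`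
uniformly in `i ∈ S`. -/
def matIdeal {S : Type*} (I : Set (Set ℕ)) (b : S → ℕ → ℕ → ℝ) : Set (Set ℕ) :=
  {K : Set ℕ | UnifConvAlong I (fun n i => ∑' k, b i n k * K.indicator 1 k) (fun _ => 0)}

/-- `I`-limit superior of a real sequence. -/
noncomputable def idealLimSup (I : Set (Set ℕ)) (s : ℕ → ℝ) : ℝ :=
  sSup {t : ℝ | {n : ℕ | t < s n} ∉ I}

/-- `I`-limit inferior of a real sequence. -/
noncomputable def idealLimInf (I : Set (Set ℕ)) (s : ℕ → ℝ) : ℝ :=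
  sInf {t : ℝ | {n : ℕ | s n < t} ∉ I}

/-- `I`-convergence of a real sequence to `a`. -/
def IdealConv (I : Set (Set ℕ)) (s : ℕ → ℝ) (a : ℝ) : Prop :=
  ∀ ε > 0, {n : ℕ | ε ≤ |s n - a|} ∈ I

/-- `B^I`-statistical convergence of `s` to `a`. -/
def BStatConv {S : Type*} (I : Set (Set ℕ)) (b : S → ℕ → ℕ → ℝ) (s : ℕ → ℝ) (a : ℝ) : Prop :=
  ∀ ε > 0, UnifConvAlong I
    (fun n i => ∑' k, b i n k * Set.indicator {k : ℕ | ε ≤ |s k - a|} 1 k) (fun _ => 0)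

/-- Characterisation of `J_{B,I}`-cluster points. -/
theorem stmt10 {S : Type*} [Nonempty S] (I : Set (Set ℕ)) (hI : IsIdeal I)
    (b : S → ℕ → ℕ → ℝ) (hb : ∀ i n k, 0 ≤ b i n k)
    (hplus : ∃ i0 : S, 0 < ⨅ n : ℕ, ∑' k, b i0 n k)
    (hsup : ∃ M : ℝ, ∀ (n : ℕ) (i : S), ∑' k, b i n k ≤ M)
    (h1 : UnifConvAlong I (fun n i => ∑' k, b i n k) (fun _ => 1))
    (s : ℕ → ℝ) (a : ℝ) :
    (∀ ε > (0 : ℝ), {n : ℕ | |s n - a| < ε} ∉ matIdeal I b) ↔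
      ∀ ε > (0 : ℝ),
        idealLimInf I
          (fun n => ⨅ i : S, ∑' k, b i n k * Set.indicator {k : ℕ | ε ≤ |s k - a|} 1 k) < 1 := by
  classical
  obtain ⟨i0, hi0⟩ := hplus
  obtain ⟨M, hM⟩ := hsup
  obtain ⟨A0, hA0⟩ := hI.1
  have hEmpty : (∅ : Set ℕ) ∈ I := hI.2.2.1 A0 hA0 ∅ (Set.empty_subset _)
  have hUniv := hI.2.1
  have hSub := hI.2.2.1
  have hUnion := hI.2.2.2
  have hind : ∀ (K : Set ℕ) (k : ℕ),
      0 ≤ K.indicator (1 : ℕ → ℝ) k ∧ K.indicator (1 : ℕ → ℝ) k ≤ 1 := by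
    intro K k; by_cases h : k ∈ K <;> simp [h]
  have hTnn : ∀ (K : Set ℕ) (n : ℕ) (i : S), 0 ≤ ∑' k, b i n k * K.indicator 1 k :=
    fun K n i => tsum_nonneg fun k => mul_nonneg (hb i n k) (hind K k).1
  have hbddT : ∀ (K : Set ℕ) (n : ℕ),
      BddBelow (Set.range fun i : S => ∑' k, b i n k * K.indicator 1 k) := by
    intro K n
    exact ⟨0, by rintro x ⟨i, rfl⟩; exact hTnn K n i⟩
  have hSm : ∀ (i : S) (n : ℕ), Summable (b i n) →
      ∀ (K : Set ℕ), Summable (fun k => b i n k * K.indicator 1 k) := by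
    intro i n h K
    refine h.of_nonneg_of_le (fun k => mul_nonneg (hb i n k) (hind K k).1) (fun k => ?_)
    nlinarith [(hind K k).1, (hind K k).2, hb i n k]
  have hsplit : ∀ (i : S) (n : ℕ) (K : Set ℕ), Summable (b i n) →
      (∑' k, b i n k * K.indicator 1 k) + (∑' k, b i n k * Kᶜ.indicator 1 k)
        = ∑' k, b i n k := by
    intro i n K h
    rw [← Summable.tsum_add (hSm i n h K) (hSm i n h Kᶜ)]
    congr 1; funext k
    by_cases hk : k ∈ K <;> simp [hk]
  have hsumOf : ∀ (i : S) (n : ℕ), 0 < ∑' k, b i n k → Summable (b i n) := by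
    intro i n h
    by_contra hs
    rw [tsum_eq_zero_of_not_summable hs] at h; exact lt_irrefl _ h
  have hbddi0 : BddBelow (Set.range fun n : ℕ => ∑' k, b i0 n k) :=
    ⟨0, by rintro x ⟨m, rfl⟩; exact tsum_nonneg (hb i0 m)⟩
  have hi0pos : ∀ n, 0 < ∑' k, b i0 n k := fun n => lt_of_lt_of_le hi0 (ciInf_le hbddi0 n)
  have hi0n : ∀ n, Summable (b i0 n) := fun n => hsumOf i0 n (hi0pos n)
  have hM0 : 0 < M := lt_of_lt_of_le (hi0pos 0) (hM 0 i0)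
  have hCD : ∀ ε : ℝ, {n : ℕ | |s n - a| < ε}ᶜ = {k : ℕ | ε ≤ |s k - a|} := by
    intro ε; ext k; simp [not_lt]
  -- facts about the liminf index set, for each ε
  have hfnn : ∀ (ε : ℝ) (n : ℕ),
      0 ≤ ⨅ i : S, ∑' k, b i n k * Set.indicator {k : ℕ | ε ≤ |s k - a|} 1 k :=
    fun ε n => le_ciInf (fun i => hTnn _ n i)
  have hTset_bdd : ∀ ε : ℝ, BddBelow {t : ℝ |
      {n : ℕ | (⨅ i : S, ∑' k, b i n k * Set.indicator {k : ℕ | ε ≤ |s k - a|} 1 k) < t} ∉ I} := by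
    intro ε
    refine ⟨0, fun t ht => ?_⟩
    by_contra h
    push_neg at h
    apply ht
    have : {n : ℕ | (⨅ i : S, ∑' k, b i n k * Set.indicator {k : ℕ | ε ≤ |s k - a|} 1 k) < t}
        = (∅ : Set ℕ) := by
      ext n; simp only [Set.mem_setOf_eq, Set.mem_empty_iff_false, iff_false, not_lt]
      exact le_trans h.le (hfnn ε n)
    rw [this]; exact hEmpty
  have hTset_ne : ∀ ε : ℝ, (M + 1) ∈ {t : ℝ |
      {n : ℕ | (⨅ i : S, ∑' k, b i n k * Set.indicator {k : ℕ | ε ≤ |s k - a|} 1 k) < t} ∉ I} := by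
    intro ε
    have : {n : ℕ | (⨅ i : S, ∑' k, b i n k * Set.indicator {k : ℕ | ε ≤ |s k - a|} 1 k) < M + 1}
        = Set.univ := by
      ext n
      simp only [Set.mem_setOf_eq, Set.mem_univ, iff_true]
      have h1' := hsplit i0 n {k : ℕ | ε ≤ |s k - a|} (hi0n n)
      have h2' := hTnn {k : ℕ | ε ≤ |s k - a|}ᶜ n i0
      have h3' : (∑' k, b i0 n k * Set.indicator {k : ℕ | ε ≤ |s k - a|} 1 k) ≤ M := by
        have := hM n i0; linarith
      calc (⨅ i : S, ∑' k, b i n k * Set.indicator {k : ℕ | ε ≤ |s k - a|} 1 k)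
          ≤ ∑' k, b i0 n k * Set.indicator {k : ℕ | ε ≤ |s k - a|} 1 k := ciInf_le (hbddT _ n) i0
        _ ≤ M := h3'
        _ < M + 1 := by linarith
    simp only [Set.mem_setOf_eq]
    rw [this]; exact hUniv
  constructor
  · -- forward direction
    intro hL ε hε
    have hC := hL ε hε
    rw [matIdeal, Set.mem_setOf_eq, UnifConvAlong] at hC
    push_neg at hC
    obtain ⟨δ0, hδ0, hfail⟩ := hC
    set δ : ℝ := min δ0 1 with hδdef
    have hδpos : 0 < δ := lt_min hδ0 one_pos
    have hδle1 : δ ≤ 1 := min_le_right _ _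
    obtain ⟨E1, hE1I, hE1⟩ := h1 (δ / 2) (by linarith)
    rw [idealLimInf]
    have hkey : (1 - δ / 4) ∈ {t : ℝ |
        {n : ℕ | (⨅ i : S, ∑' k, b i n k * Set.indicator {k : ℕ | ε ≤ |s k - a|} 1 k) < t} ∉ I} := by
      simp only [Set.mem_setOf_eq]
      intro hA
      obtain ⟨i, hi⟩ := hfail ({n : ℕ | (⨅ i : S,
        ∑' k, b i n k * Set.indicator {k : ℕ | ε ≤ |s k - a|} 1 k) < 1 - δ / 4} ∪ E1)
        (hUnion _ hA _ hE1I)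
      rw [Set.not_subset] at hi
      obtain ⟨n, hn1, hn2⟩ := hi
      simp only [Set.mem_setOf_eq, sub_zero] at hn1
      have hnA : n ∉ {n : ℕ | (⨅ i : S,
          ∑' k, b i n k * Set.indicator {k : ℕ | ε ≤ |s k - a|} 1 k) < 1 - δ / 4} :=
        fun h => hn2 (Set.mem_union_left _ h)
      have hnE1 : n ∉ E1 := fun h => hn2 (Set.mem_union_right _ h)
      have htot : |(∑' k, b i n k) - 1| < δ / 2 := by
        by_contra h
        push_neg at h
        exact hnE1 (hE1 i h)
      have htotpos : 0 < ∑' k, b i n k := by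
        have := abs_lt.mp htot
        linarith
      have hsm := hsumOf i n htotpos
      have hC2 : δ ≤ ∑' k, b i n k * Set.indicator {n : ℕ | |s n - a| < ε} 1 k := by
        have habs : |∑' k, b i n k * Set.indicator {n : ℕ | |s n - a| < ε} 1 k|
            = ∑' k, b i n k * Set.indicator {n : ℕ | |s n - a| < ε} 1 k :=
          abs_of_nonneg (hTnn _ n i)
        calc δ ≤ δ0 := min_le_left _ _
          _ ≤ _ := by rw [← habs]; exact hn1
      have hspl := hsplit i n {n : ℕ | |s n - a| < ε} hsm
      rw [hCD ε] at hspl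
      apply hnA
      simp only [Set.mem_setOf_eq]
      have habs2 := abs_lt.mp htot
      calc (⨅ i : S, ∑' k, b i n k * Set.indicator {k : ℕ | ε ≤ |s k - a|} 1 k)
          ≤ ∑' k, b i n k * Set.indicator {k : ℕ | ε ≤ |s k - a|} 1 k := ciInf_le (hbddT _ n) i
        _ < 1 - δ / 4 := by linarith
    calc sInf {t : ℝ |
        {n : ℕ | (⨅ i : S, ∑' k, b i n k * Set.indicator {k : ℕ | ε ≤ |s k - a|} 1 k) < t} ∉ I}
        ≤ 1 - δ / 4 := csInf_le (hTset_bdd ε) hkey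
      _ < 1 := by linarith
  · -- backward direction
    intro hR ε hε hC
    have hlim := hR ε hε
    rw [matIdeal, Set.mem_setOf_eq, UnifConvAlong] at hC
    rw [idealLimInf] at hlim
    have hge : (1:ℝ) ≤ sInf {t : ℝ |
        {n : ℕ | (⨅ i : S, ∑' k, b i n k * Set.indicator {k : ℕ | ε ≤ |s k - a|} 1 k) < t} ∉ I} := by
      refine le_csInf ⟨M + 1, hTset_ne ε⟩ ?_
      intro t ht
      by_contra hlt
      push_neg at hlt
      apply ht
      set δ : ℝ := min (1 - t) 1 with hδdef
      have hδpos : 0 < δ := lt_min (by linarith) one_pos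
      have hδle1 : δ ≤ 1 := min_le_right _ _
      have htδ : t ≤ 1 - δ := by
        have : δ ≤ 1 - t := min_le_left _ _
        linarith
      obtain ⟨E1, hE1I, hE1⟩ := h1 (δ / 2) (by linarith)
      obtain ⟨E2, hE2I, hE2⟩ := hC (δ / 2) (by linarith)
      refine hSub _ (hUnion _ hE1I _ hE2I) _ ?_
      intro n hn
      simp only [Set.mem_setOf_eq] at hn
      by_contra hnE
      have hnE1 : n ∉ E1 := fun h => hnE (Set.mem_union_left _ h)
      have hnE2 : n ∉ E2 := fun h => hnE (Set.mem_union_right _ h)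
      have hcontra : 1 - δ ≤ ⨅ i : S,
          ∑' k, b i n k * Set.indicator {k : ℕ | ε ≤ |s k - a|} 1 k := by
        refine le_ciInf (fun i => ?_)
        have htot : |(∑' k, b i n k) - 1| < δ / 2 := by
          by_contra h
          push_neg at h
          exact hnE1 (hE1 i h)
        have hCsmall : |(∑' k, b i n k * Set.indicator {n : ℕ | |s n - a| < ε} 1 k) - 0| < δ / 2 := by
          by_contra h
          push_neg at h
          exact hnE2 (hE2 i h)
        rw [sub_zero, abs_of_nonneg (hTnn _ n i)] at hCsmall
        have habs2 := abs_lt.mp htot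
        have htotpos : 0 < ∑' k, b i n k := by linarith
        have hspl := hsplit i n {n : ℕ | |s n - a| < ε} (hsumOf i n htotpos)
        rw [hCD ε] at hspl
        linarith
      linarith
    linarith
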